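/- Let (T, (P_t)) be a tree-decomposition of a finite set E and Q a tangle that orients every edge-separation of T. Then the smallest subgraph S(Q) of T in which Q lives is connected (a subtree). -/

import Mathlib

variable {E : Type*}

/-- `f` is symmetric: `f X = f (E \ X)` for all `X ⊆ E`. -/
def FSymm (f : Set E → ℤ) : Prop := ∀ X : Set E, f X = f Xᶜ

/-- `f` is submodular. -/
def FSubmod (f : Set E → ℤ) : Prop :=
  ∀ X Y : Set E, f (X ∩ Y) + f (X ∪ Y) ≤ f X + f Y

/-- Separations `(A,B)` and `(C,D)` are nested: some side of the first
is contained in some side of the second. -/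
def Nested (A B C D : Set E) : Prop := A ⊆ C ∨ A ⊆ D ∨ B ⊆ C ∨ B ⊆ D

/-- `T` is a tangle of order `k+1`: a set of small sides of separations of
order at most `k`, orienting every separation of order at most `k`, such that
no three small sides cover `E` and the complement of a singleton is never small. -/
def IsTangle (f : Set E → ℤ) (k : ℤ) (T : Set (Set E)) : Prop :=
  (∀ A ∈ T, f A ≤ k) ∧
  (∀ A : Set E, f A ≤ k → A ∈ T ∨ Aᶜ ∈ T) ∧
  (∀ A₁ ∈ T, ∀ A₂ ∈ T, ∀ A₃ ∈ T, A₁ ∪ A₂ ∪ A₃ ≠ Set.univ) ∧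
  (∀ e : E, ({e}ᶜ : Set E) ∉ T)

/-- A tangle is maximal if it is not included in any other tangle. -/
def IsMaximalTangle (f : Set E → ℤ) (T : Set (Set E)) : Prop :=
  (∃ k, IsTangle f k T) ∧
  ∀ T' : Set (Set E), (∃ k, IsTangle f k T') → T ⊆ T' → T' = T

/-- The separation with sides `A`, `Aᶜ` distinguishes the tangles `P` and `Q`. -/
def Distinguishes (A : Set E) (P Q : Set (Set E)) : Prop :=
  (A ∈ P ∧ Aᶜ ∈ Q) ∨ (Aᶜ ∈ P ∧ A ∈ Q)

/-- The separation with sides `A`, `Aᶜ` distinguishes `P` and `Q` efficiently. -/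
def DistinguishesEff (f : Set E → ℤ) (A : Set E) (P Q : Set (Set E)) : Prop :=
  Distinguishes A P Q ∧ ∀ C : Set E, Distinguishes C P Q → f A ≤ f C

variable {V : Type*}

/-- `P` is a partition of `E` into (possibly empty) classes indexed by `V`. -/
def IsPartitionFam (P : V → Set E) : Prop :=
  (∀ x y : V, x ≠ y → Disjoint (P x) (P y)) ∧ (⋃ x, P x) = Set.univ

/-- For an edge `tu` of the decomposition tree `G`, the side `S_t` of the
corresponding separation: the union of the parts over the component of
`G - tu` containing `t`. -/
def treeSide (G : SimpleGraph V) (P : V → Set E) (t u : V) : Set E :=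
  ⋃ x ∈ {x | (G.deleteEdges {s(t, u)}).Reachable t x}, P x

/-- A tangle `Q` lives in a nonempty subgraph `S` of the decomposition tree if
for every vertex `t` of `S` and every edge `tu` incident with `t` but not in
`S`, `Q` orients the corresponding separation towards the `t`-side, i.e. the
`u`-side is small in `Q`. -/
def LivesIn (G : SimpleGraph V) (P : V → Set E) (Q : Set (Set E))
    (S : G.Subgraph) : Prop :=
  S.verts.Nonempty ∧
    ∀ t ∈ S.verts, ∀ u : V, G.Adj t u → ¬ S.Adj t u → treeSide G P u t ∈ Q


section AuxTreeTangle

open SimpleGraph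

variable {E : Type*} {V : Type*}

lemma reach_or {G : SimpleGraph V} (hc : G.Preconnected) (a b v : V) :
    (G.deleteEdges {s(a,b)}).Reachable a v ∨ (G.deleteEdges {s(a,b)}).Reachable b v := by
  obtain ⟨p⟩ := hc a v
  suffices h : ∀ {x y : V} (_ : G.Walk x y),
      (G.deleteEdges {s(a,b)}).Reachable a x ∨ (G.deleteEdges {s(a,b)}).Reachable b x →
      (G.deleteEdges {s(a,b)}).Reachable a y ∨ (G.deleteEdges {s(a,b)}).Reachable b y by
    exact h p (Or.inl (SimpleGraph.Reachable.refl a))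
  intro x y p
  induction p with
  | nil => exact id
  | @cons x z y h q ih =>
    intro hx
    by_cases he : s(x, z) = s(a, b)
    · rw [Sym2.eq_iff] at he
      rcases he with ⟨hxa, hzb⟩ | ⟨hxb, hza⟩
      · exact ih (Or.inr (by rw [hzb]))
      · exact ih (Or.inl (by rw [hza]))
    · have hadj : (G.deleteEdges {s(a,b)}).Adj x z :=
        SimpleGraph.deleteEdges_adj.mpr ⟨h, by simpa using he⟩
      rcases hx with hx | hx
      · exact ih (Or.inl (hx.trans hadj.reachable))
      · exact ih (Or.inr (hx.trans hadj.reachable))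

lemma mem_treeSide {G : SimpleGraph V} {P : V → Set E} {t u : V} {x : E} :
    x ∈ treeSide G P t u ↔ ∃ v, (G.deleteEdges {s(t,u)}).Reachable t v ∧ x ∈ P v := by
  simp [treeSide]

lemma treeSide_union {G : SimpleGraph V} (hG : G.Connected) {P : V → Set E}
    (hP : IsPartitionFam P) (a b : V) :
    treeSide G P a b ∪ treeSide G P b a = Set.univ := by
  ext x
  simp only [Set.mem_univ, iff_true, Set.mem_union]
  have hx : x ∈ ⋃ v, P v := hP.2 ▸ Set.mem_univ x
  obtain ⟨v, hv⟩ := Set.mem_iUnion.mp hx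
  rcases reach_or hG.preconnected a b v with h | h
  · exact Or.inl (mem_treeSide.mpr ⟨v, h, hv⟩)
  · refine Or.inr (mem_treeSide.mpr ⟨v, ?_, hv⟩)
    rwa [Sym2.eq_swap]

lemma tangle_not_cover {f : Set E → ℤ} {Q : Set (Set E)} (hQ : ∃ k, IsTangle f k Q)
    {A B : Set E} (hA : A ∈ Q) (hB : B ∈ Q) (hAB : A ∪ B = Set.univ) : False := by
  obtain ⟨k, -, -, h3, -⟩ := hQ
  exact h3 A hA A hA B hB (by rw [Set.union_self]; exact hAB)

lemma no_two_out {G : SimpleGraph V} (hG : G.IsTree) {P : V → Set E}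
    (hP : IsPartitionFam P) {f : Set E → ℤ} {Q : Set (Set E)} (hQ : ∃ k, IsTangle f k Q)
    {a b c : V} (hab : G.Adj a b) (hac : G.Adj a c) (hbc : b ≠ c)
    (h1 : treeSide G P a b ∈ Q) (h2 : treeSide G P a c ∈ Q) : False := by
  haveI := Classical.decEq V
  apply tangle_not_cover hQ h1 h2
  ext x
  simp only [Set.mem_univ, iff_true, Set.mem_union]
  have hx : x ∈ ⋃ v, P v := hP.2 ▸ Set.mem_univ x
  obtain ⟨v, hv⟩ := Set.mem_iUnion.mp hx
  by_cases h : (G.deleteEdges {s(a,b)}).Reachable a v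
  · exact Or.inl (mem_treeSide.mpr ⟨v, h, hv⟩)
  · have hbv : (G.deleteEdges {s(a,b)}).Reachable b v :=
      (reach_or hG.1.preconnected a b v).resolve_left h
    obtain ⟨p⟩ := hbv
    have hanp : a ∉ p.support := fun ha => h ⟨p.dropUntil a ha⟩
    have hedges : ∀ e ∈ p.edges, e ∈ (G.deleteEdges {s(a,c)}).edgeSet := by
      intro e he
      have heG : e ∈ G.edgeSet := by
        have := p.edges_subset_edgeSet he
        rw [SimpleGraph.edgeSet_deleteEdges] at this
        exact this.1
      rw [SimpleGraph.edgeSet_deleteEdges]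
      refine ⟨heG, ?_⟩
      intro hmem
      rw [Set.mem_singleton_iff] at hmem
      subst hmem
      exact hanp (p.fst_mem_support_of_mem_edges he)
    have hadjab' : (G.deleteEdges {s(a,c)}).Adj a b := by
      rw [SimpleGraph.deleteEdges_adj]
      refine ⟨hab, ?_⟩
      intro hmem
      rw [Set.mem_singleton_iff, Sym2.eq_iff] at hmem
      rcases hmem with ⟨-, h'⟩ | ⟨h', -⟩
      · exact hbc h'
      · exact hac.ne h'
    exact Or.inr (mem_treeSide.mpr ⟨v, hadjab'.reachable.trans ⟨p.transfer _ hedges⟩, hv⟩)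

lemma exists_sink [Fintype V] {G : SimpleGraph V} (hG : G.IsTree) {P : V → Set E}
    (hP : IsPartitionFam P) {f : Set E → ℤ} {Q : Set (Set E)} (hQ : ∃ k, IsTangle f k Q)
    (hor : ∀ t u : V, G.Adj t u → treeSide G P t u ∈ Q ∨ treeSide G P u t ∈ Q) :
    ∃ t₀ : V, ∀ u, G.Adj t₀ u → treeSide G P u t₀ ∈ Q := by
  by_contra hno
  push_neg at hno
  have hout : ∀ t : V, ∃ u, G.Adj t u ∧ treeSide G P t u ∈ Q := by
    intro t
    obtain ⟨u, hadj, hn⟩ := hno t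
    exact ⟨u, hadj, (hor t u hadj).resolve_right hn⟩
  choose o ho1 ho2 using hout
  haveI : Fintype G.edgeSet := Fintype.ofFinite _
  have hinj : Function.Injective (fun t : V => (⟨s(t, o t), (ho1 t)⟩ : G.edgeSet)) := by
    intro u v huv
    replace huv := congrArg Subtype.val huv
    simp only [Sym2.eq_iff] at huv
    rcases huv with ⟨h, -⟩ | ⟨h1, h2⟩
    · exact h
    · exfalso
      refine tangle_not_cover hQ (ho2 u) (ho2 v) ?_
      rw [h2, ← h1]
      exact treeSide_union hG.1 hP u v
  have hle := Fintype.card_le_of_injective _ hinj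
  have hcard := hG.card_edgeFinset
  rw [SimpleGraph.edgeFinset, Set.toFinset_card] at hcard
  have heq : Fintype.card { x // x ∈ G.edgeSet } = Fintype.card ↑G.edgeSet := rfl
  omega

lemma orient_toward_sink {G : SimpleGraph V} (hG : G.IsTree) {P : V → Set E}
    (hP : IsPartitionFam P) {f : Set E → ℤ} {Q : Set (Set E)} (hQ : ∃ k, IsTangle f k Q)
    (hor : ∀ t u : V, G.Adj t u → treeSide G P t u ∈ Q ∨ treeSide G P u t ∈ Q)
    {t₀ : V} (hs : ∀ u, G.Adj t₀ u → treeSide G P u t₀ ∈ Q) :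
    ∀ {b : V} (p : G.Walk b t₀), p.IsPath → ∀ (a : V), G.Adj a b → a ∉ p.support →
      treeSide G P a b ∈ Q := by
  intro b p
  induction p with
  | nil => exact fun _ a hab _ => hs a hab.symm
  | @cons b c _ h q ih =>
    intro hp a hab hasupp
    rw [SimpleGraph.Walk.support_cons, List.mem_cons] at hasupp
    push_neg at hasupp
    have hq : q.IsPath := hp.of_cons
    have hbq : b ∉ q.support := ((SimpleGraph.Walk.cons_isPath_iff h q).mp hp).2
    have hbc : treeSide G P b c ∈ Q := ih hs hq b h hbq
    rcases hor a b hab with h1 | h2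
    · exact h1
    · exfalso
      have hac : a ≠ c := fun he => hasupp.2 (he ▸ q.start_mem_support)
      exact no_two_out hG hP hQ hab.symm h hac h2 hbc

end AuxTreeTangle

/-- The smallest subgraph in which a tangle lives (the intersection of all
subgraphs in which it lives) is connected, i.e. a subtree. -/
theorem stmt_16 [Fintype E] [Fintype V] (f : Set E → ℤ)
    (hsym : FSymm f) (hsub : FSubmod f)
    (G : SimpleGraph V) (hG : G.IsTree) (P : V → Set E) (hP : IsPartitionFam P)
    (Q : Set (Set E)) (hQ : ∃ k, IsTangle f k Q)
    (hor : ∀ t u : V, G.Adj t u →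
      treeSide G P t u ∈ Q ∨ treeSide G P u t ∈ Q) :
    (sInf {S : G.Subgraph | LivesIn G P Q S}).Connected := by
  obtain ⟨t₀, hs⟩ := exists_sink hG hP hQ hor
  have hlive₀ : LivesIn G P Q (G.singletonSubgraph t₀) := by
    refine ⟨⟨t₀, rfl⟩, ?_⟩
    intro t ht u hadj _
    rw [SimpleGraph.singletonSubgraph_verts, Set.mem_singleton_iff] at ht
    subst ht
    exact hs u hadj
  have hmem : ∀ S ∈ {S : G.Subgraph | LivesIn G P Q S}, t₀ ∈ S.verts := by
    rintro S ⟨⟨s₁, hsv⟩, hcond⟩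
    haveI := Classical.decEq V
    have key : ∀ {s₂ : V} (p : G.Walk s₂ t₀), p.IsPath → s₂ ∈ S.verts → t₀ ∈ S.verts := by
      intro s₂ p
      induction p with
      | nil => exact fun _ h => h
      | @cons b c _ h q ih =>
        intro hp hbv
        by_cases hS' : S.Adj b c
        · exact ih hs hlive₀ hp.of_cons (S.edge_vert hS'.symm)
        · have h1 : treeSide G P c b ∈ Q := hcond b hbv c h hS'
          have hbq : b ∉ q.support := ((SimpleGraph.Walk.cons_isPath_iff h q).mp hp).2
          have h2 : treeSide G P b c ∈ Q :=
            orient_toward_sink hG hP hQ hor hs q hp.of_cons b h hbq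
          exact (tangle_not_cover hQ h2 h1 (treeSide_union hG.1 hP b c)).elim
    obtain ⟨p⟩ := hG.1.preconnected s₁ t₀
    exact key p.toPath.1 p.toPath.2 hsv
  have h1 : sInf {S : G.Subgraph | LivesIn G P Q S} = G.singletonSubgraph t₀ := by
    apply le_antisymm
    · exact sInf_le hlive₀
    · apply le_sInf
      intro S hS
      rw [SimpleGraph.singletonSubgraph_le_iff]
      exact hmem S hS
  rw [h1]
  exact SimpleGraph.Subgraph.singletonSubgraph_connected
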